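/- Let V be a 2k-dimensional real subspace of C^{n+1} and Π_V the orthogonal projection onto V. For x in the unit sphere S^{2n+1}, let vol(Π_V x ∧ Π_V Jx) denote the area of the parallelogram spanned by Π_V x and Π_V (Jx). Then ∫_{S^{2n+1}} vol(Π_V x ∧ Π_V Jx) dx ≤ ∫_{S^{2n+1}} ‖Π_V x‖² dx, with equality if and only if V is a complex subspace (i.e., JV = V). -/

import Mathlib

open MeasureTheory
open scoped RealInnerProductSpace

section Aux

variable {E : Type*} [NormedAddCommGroup E] [InnerProductSpace ℝ E]

theorem aux_pyth [FiniteDimensional ℝ E] (V : Submodule ℝ E) (y : E) :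
    ‖y‖ ^ 2 = ‖y - (Submodule.orthogonalProjection V y : E)‖ ^ 2 + ‖Submodule.orthogonalProjection V y‖ ^ 2 := by
  have h := Submodule.orthogonalProjectionFn_norm_sq V y
  rw [Submodule.orthogonalProjectionFn_eq] at h
  have hc : ‖(Submodule.orthogonalProjection V y : E)‖ = ‖Submodule.orthogonalProjection V y‖ := rfl
  rw [← hc]; nlinarith [h]

theorem aux_norm_le [FiniteDimensional ℝ E] (V : Submodule ℝ E) (y : E) :
    ‖Submodule.orthogonalProjection V y‖ ≤ ‖y‖ := by
  nlinarith [aux_pyth V y, sq_nonneg ‖y - (Submodule.orthogonalProjection V y : E)‖, norm_nonneg y,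
    norm_nonneg (Submodule.orthogonalProjection V y)]

theorem aux_mem [FiniteDimensional ℝ E] (V : Submodule ℝ E) (y : E)
    (h : ‖Submodule.orthogonalProjection V y‖ = ‖y‖) : y ∈ V := by
  have h1 := aux_pyth V y
  rw [← h] at h1
  have h2 : ‖y - (Submodule.orthogonalProjection V y : E)‖ = 0 := by nlinarith [norm_nonneg (y - (Submodule.orthogonalProjection V y : E))]
  have h3 : y = (Submodule.orthogonalProjection V y : E) := by
    have := sub_eq_zero.mp (norm_eq_zero.mp h2); exact this
  rw [h3]; exact (Submodule.orthogonalProjection V y).2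

theorem aux_J (J : E ≃ₗᵢ[ℝ] E) (hJ : ∀ x, J (J x) = -x) (u : E) : ⟪u, J u⟫ = 0 := by
  have h := J.inner_map_map u (J u)
  rw [hJ] at h
  simp only [inner_neg_right] at h
  have := real_inner_comm u (J u)
  linarith [real_inner_comm (J u) u]

theorem aux_CS [FiniteDimensional ℝ E] (V : Submodule ℝ E) (u w : V) :
    ⟪u, w⟫ ^ 2 ≤ ‖u‖ ^ 2 * ‖w‖ ^ 2 := by
  have h := abs_real_inner_le_norm u w
  nlinarith [abs_nonneg ⟪u,w⟫, sq_abs ⟪u,w⟫, norm_nonneg u, norm_nonneg w]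

theorem aux_comm [FiniteDimensional ℝ E] (J : E ≃ₗᵢ[ℝ] E) (V : Submodule ℝ E)
    (hJV : V.map (J.toLinearEquiv : E →ₗ[ℝ] E) = V) :
    ∀ x : E, (Submodule.orthogonalProjection V (J x) : E) = J (Submodule.orthogonalProjection V x) := by
  intro x
  refine Submodule.eq_starProjection_of_mem_of_inner_eq_zero ?_ ?_
  · have h1 : J ((Submodule.orthogonalProjection V x : E)) ∈ V.map (J.toLinearEquiv : E →ₗ[ℝ] E) :=
      Submodule.mem_map_of_mem (Submodule.orthogonalProjection V x).2
    rwa [hJV] at h1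
  · intro w hw
    rw [← hJV] at hw
    obtain ⟨w', hw', rfl⟩ := Submodule.mem_map.mp hw
    have hms : (J x - J ((Submodule.orthogonalProjection V x : E))) = J (x - Submodule.orthogonalProjection V x) :=
      (map_sub J _ _).symm
    rw [hms]
    show ⟪J (x - Submodule.orthogonalProjection V x), J w'⟫ = 0
    rw [J.inner_map_map]
    exact Submodule.starProjection_inner_eq_zero x w' hw'

theorem aux_pt [FiniteDimensional ℝ E] (J : E ≃ₗᵢ[ℝ] E) (V : Submodule ℝ E)
    (haJ : ∀ u : E, ⟪u, J u⟫ = 0)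
    (hcomm : ∀ x : E, (Submodule.orthogonalProjection V (J x) : E) = J (Submodule.orthogonalProjection V x)) :
    ∀ x : E, Real.sqrt (‖Submodule.orthogonalProjection V x‖ ^ 2 * ‖Submodule.orthogonalProjection V (J x)‖ ^ 2
      - (⟪Submodule.orthogonalProjection V x, Submodule.orthogonalProjection V (J x)⟫) ^ 2)
      = ‖Submodule.orthogonalProjection V x‖ ^ 2 := by
  intro x
  have h1 : ‖Submodule.orthogonalProjection V (J x)‖ = ‖Submodule.orthogonalProjection V x‖ := by
    have e1 : ‖(Submodule.orthogonalProjection V (J x) : E)‖ = ‖Submodule.orthogonalProjection V (J x)‖ := rfl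
    have e2 : ‖(Submodule.orthogonalProjection V x : E)‖ = ‖Submodule.orthogonalProjection V x‖ := rfl
    rw [← e1, ← e2, hcomm, J.norm_map]
  have h2 : ⟪Submodule.orthogonalProjection V x, Submodule.orthogonalProjection V (J x)⟫ = 0 := by
    rw [Submodule.coe_inner, hcomm]
    exact haJ _
  rw [h1, h2]
  have hr : ‖Submodule.orthogonalProjection V x‖^2 * ‖Submodule.orthogonalProjection V x‖^2 - 0^2
      = (‖Submodule.orthogonalProjection V x‖^2)^2 := by ring
  rw [hr, Real.sqrt_sq (sq_nonneg _)]

theorem aux_main [FiniteDimensional ℝ E] [MeasurableSpace E] [BorelSpace E]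
    (J : E ≃ₗᵢ[ℝ] E) (hJ : ∀ x, J (J x) = -x)
    (V : Submodule ℝ E)
    (μ : Measure E) [IsFiniteMeasure μ] (hμ : μ ≠ 0)
    (hinv : ∀ g : E ≃ₗᵢ[ℝ] E, μ.map g = μ)
    (hsphere : μ (Metric.sphere (0 : E) 1)ᶜ = 0) :
    (∫ x, Real.sqrt (‖Submodule.orthogonalProjection V x‖ ^ 2 * ‖Submodule.orthogonalProjection V (J x)‖ ^ 2
          - (⟪Submodule.orthogonalProjection V x, Submodule.orthogonalProjection V (J x)⟫) ^ 2) ∂μ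
        ≤ ∫ x, ‖Submodule.orthogonalProjection V x‖ ^ 2 ∂μ) ∧
    ((∫ x, Real.sqrt (‖Submodule.orthogonalProjection V x‖ ^ 2 * ‖Submodule.orthogonalProjection V (J x)‖ ^ 2
          - (⟪Submodule.orthogonalProjection V x, Submodule.orthogonalProjection V (J x)⟫) ^ 2) ∂μ
        = ∫ x, ‖Submodule.orthogonalProjection V x‖ ^ 2 ∂μ)
      ↔ V.map (J.toLinearEquiv : E →ₗ[ℝ] E) = V) := by
  classical
  set f : E → ℝ := fun x =>
    Real.sqrt (‖Submodule.orthogonalProjection V x‖ ^ 2 * ‖Submodule.orthogonalProjection V (J x)‖ ^ 2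
      - (⟪Submodule.orthogonalProjection V x, Submodule.orthogonalProjection V (J x)⟫) ^ 2) with hfdef
  set g : E → ℝ := fun x => ‖Submodule.orthogonalProjection V x‖ ^ 2 with hgdef
  set h : E → ℝ := fun x => (g x + g (J x)) / 2 with hhdef
  -- continuity
  have cP : Continuous fun x : E => Submodule.orthogonalProjection V x := (Submodule.orthogonalProjection V).continuous
  have cg : Continuous g := by
    rw [hgdef]; exact (cP.norm).pow 2
  have cgJ : Continuous fun x => g (J x) := cg.comp J.continuous
  have ch : Continuous h := by
    rw [hhdef]; exact (cg.add cgJ).div_const 2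
  have cf : Continuous f := by
    rw [hfdef]
    apply Continuous.sqrt
    apply Continuous.sub
    · exact ((cP.norm.pow 2).mul ((cP.comp J.continuous).norm.pow 2))
    · exact (cP.inner (cP.comp J.continuous)).pow 2
  -- pointwise inequality
  have hfle : ∀ x, f x ≤ h x := by
    intro x
    simp only [hfdef, hhdef, hgdef]
    set a := ‖Submodule.orthogonalProjection V x‖ with ha
    set b := ‖Submodule.orthogonalProjection V (J x)‖ with hb
    set c := ⟪Submodule.orthogonalProjection V x, Submodule.orthogonalProjection V (J x)⟫ with hc
    have h1 : a ^ 2 * b ^ 2 - c ^ 2 ≤ ((a ^ 2 + b ^ 2) / 2) ^ 2 := by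
      nlinarith [sq_nonneg (a ^ 2 - b ^ 2), sq_nonneg c]
    calc Real.sqrt (a ^ 2 * b ^ 2 - c ^ 2) ≤ Real.sqrt (((a ^ 2 + b ^ 2) / 2) ^ 2) :=
          Real.sqrt_le_sqrt h1
      _ = (a ^ 2 + b ^ 2) / 2 := Real.sqrt_sq (by positivity)
  have hfnonneg : ∀ x, 0 ≤ f x := fun x => Real.sqrt_nonneg _
  -- a.e. on sphere
  have hae_sphere : ∀ᵐ x ∂μ, ‖x‖ = 1 := by
    rw [ae_iff]
    convert hsphere using 2
    ext x
    simp [mem_sphere_zero_iff_norm]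
  -- bounds and integrability
  have hgb : ∀ x : E, ‖x‖ = 1 → g x ≤ 1 := by
    intro x hx
    simp only [hgdef]
    nlinarith [aux_norm_le V x, norm_nonneg (Submodule.orthogonalProjection V x), hx]
  have hgJb : ∀ x : E, ‖x‖ = 1 → g (J x) ≤ 1 := by
    intro x hx
    apply hgb
    rw [J.norm_map, hx]
  have ig : Integrable g μ := by
    refine Integrable.mono' (integrable_const 1) cg.aestronglyMeasurable ?_
    refine hae_sphere.mono fun x hx => ?_
    rw [Real.norm_eq_abs, abs_of_nonneg (by simp [hgdef])]
    exact hgb x hx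
  have igJ : Integrable (fun x => g (J x)) μ := by
    refine Integrable.mono' (integrable_const 1) cgJ.aestronglyMeasurable ?_
    refine hae_sphere.mono fun x hx => ?_
    rw [Real.norm_eq_abs, abs_of_nonneg (by simp [hgdef])]
    exact hgJb x hx
  have ih : Integrable h μ := by
    rw [hhdef]; exact (ig.add igJ).div_const 2
  have iff_ : Integrable f μ := by
    refine Integrable.mono' (integrable_const 1) cf.aestronglyMeasurable ?_
    refine hae_sphere.mono fun x hx => ?_
    rw [Real.norm_eq_abs, abs_of_nonneg (hfnonneg x)]
    calc f x ≤ h x := hfle x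
      _ ≤ 1 := by simp only [hhdef]; linarith [hgb x hx, hgJb x hx]
  -- invariance: ∫ g∘J = ∫ g
  have hJint : ∫ x, g (J x) ∂μ = ∫ x, g x ∂μ := by
    have hm : AEMeasurable (⇑J) μ := J.continuous.measurable.aemeasurable
    have hsm : AEStronglyMeasurable g (μ.map ⇑J) := by
      rw [hinv J]; exact cg.aestronglyMeasurable
    have := integral_map hm hsm
    rw [hinv J] at this
    exact this.symm
  have hIh : ∫ x, h x ∂μ = ∫ x, g x ∂μ := by
    simp only [hhdef]
    rw [integral_div, integral_add ig igJ, hJint]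
    ring
  have part1 : ∫ x, f x ∂μ ≤ ∫ x, g x ∂μ := by
    calc ∫ x, f x ∂μ ≤ ∫ x, h x ∂μ := integral_mono iff_ ih hfle
      _ = ∫ x, g x ∂μ := hIh
  refine ⟨part1, ⟨fun hEq => ?_, fun hJV => ?_⟩⟩
  · -- forward direction
    have h0 : ∫ x, (h x - f x) ∂μ = 0 := by
      rw [integral_sub ih iff_, hIh, hEq, sub_self]
    have hae0 : (fun x => h x - f x) =ᵐ[μ] 0 :=
      (integral_eq_zero_iff_of_nonneg (fun x => sub_nonneg.2 (hfle x)) (ih.sub iff_)).mp h0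
    have hU0 : μ {x | f x ≠ h x} = 0 := by
      have h1 := hae0
      rw [Filter.EventuallyEq, ae_iff] at h1
      refine measure_mono_null ?_ h1
      intro x hx
      simp only [Set.mem_setOf_eq, Pi.zero_apply] at *
      exact fun hcon => hx (sub_eq_zero.mp hcon).symm
    -- support point on the sphere
    have hex : ∃ y ∈ Metric.sphere (0 : E) 1, ∀ U : Set E, IsOpen U → y ∈ U → μ U ≠ 0 := by
      by_contra hcon
      push_neg at hcon
      choose U hUo hUm hU0' using hcon
      obtain ⟨t, hcov⟩ := (isCompact_sphere (0 : E) 1).elim_nhds_subcover'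
        (fun y hy => U y hy) (fun y hy => (hUo y hy).mem_nhds (hUm y hy))
      have hs0 : μ (Metric.sphere (0 : E) 1) = 0 := by
        refine measure_mono_null hcov (le_antisymm ?_ zero_le)
        calc μ (⋃ x ∈ t, U x.1 x.2) ≤ ∑ x ∈ t, μ (U x.1 x.2) := measure_biUnion_finset_le (μ := μ) t _
          _ = 0 := Finset.sum_eq_zero fun y _ => hU0' y.1 y.2
      have huniv : μ Set.univ = 0 := by
        have hle := measure_union_le (μ := μ) (Metric.sphere (0 : E) 1) (Metric.sphere (0 : E) 1)ᶜ
        rw [Set.union_compl_self, hs0, hsphere] at hle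
        rw [add_zero] at hle
        exact le_antisymm hle zero_le
      exact hμ (Measure.measure_univ_eq_zero.mp huniv)
    have hSop : IsOpen {z : E | f z ≠ h z} := by
      have heq : {z : E | f z ≠ h z} = (fun z => h z - f z) ⁻¹' ({0}ᶜ) := by
        ext z
        simp only [Set.mem_setOf_eq, Set.mem_preimage, Set.mem_compl_iff,
          Set.mem_singleton_iff, sub_eq_zero]
        exact ⟨fun hh e => hh e.symm, fun hh e => hh e.symm⟩
      rw [heq]
      exact isOpen_compl_singleton.preimage (ch.sub cf)
    have hkey : ∀ x : E, ‖x‖ = 1 → f x = h x := by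
      intro x hx
      by_contra hne
      obtain ⟨y, hy, hysupp⟩ := hex
      have hyx : ‖y‖ = ‖x‖ := by rw [hx]; exact mem_sphere_zero_iff_norm.mp hy
      set gI : E ≃ₗᵢ[ℝ] E := Submodule.reflection (ℝ ∙ (y - x))ᗮ with hgI
      have hgyx : gI y = x := Submodule.reflection_sub hyx
      have hpre : IsOpen (⇑gI ⁻¹' {z : E | f z ≠ h z}) := hSop.preimage gI.continuous
      have hmem : y ∈ ⇑gI ⁻¹' {z : E | f z ≠ h z} := by
        simp only [Set.mem_preimage, Set.mem_setOf_eq, hgyx]; exact hne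
      refine hysupp _ hpre hmem ?_
      calc μ (⇑gI ⁻¹' {z : E | f z ≠ h z}) = (μ.map gI) {z : E | f z ≠ h z} :=
            (Measure.map_apply gI.continuous.measurable hSop.measurableSet).symm
        _ = μ {z : E | f z ≠ h z} := by rw [hinv gI]
        _ = 0 := hU0
    have hsub : ∀ v ∈ V, J v ∈ V := by
      intro v hv
      rcases eq_or_ne v 0 with rfl | hv0
      · simpa using V.zero_mem
      · have hn0 : ‖v‖ ≠ 0 := norm_ne_zero_iff.2 hv0
        set x := ‖v‖⁻¹ • v with hxdef
        have hxn : ‖x‖ = 1 := by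
          rw [hxdef, norm_smul, norm_inv, norm_norm, inv_mul_cancel₀ hn0]
        have hxV : x ∈ V := V.smul_mem _ hv
        have hPx : (Submodule.orthogonalProjection V x : E) = x := Submodule.starProjection_eq_self_iff.mpr hxV
        have ha : ‖Submodule.orthogonalProjection V x‖ = 1 := by
          have e1 : ‖(Submodule.orthogonalProjection V x : E)‖ = ‖Submodule.orthogonalProjection V x‖ := rfl
          rw [← e1, hPx, hxn]
        have hfh := hkey x hxn
        simp only [hfdef, hhdef, hgdef] at hfh
        have hcs := aux_CS V (Submodule.orthogonalProjection V x) (Submodule.orthogonalProjection V (J x))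
        set b := ‖Submodule.orthogonalProjection V (J x)‖ with hbd
        set c := ⟪Submodule.orthogonalProjection V x, Submodule.orthogonalProjection V (J x)⟫ with hcd
        have hb0 : (0:ℝ) ≤ b := norm_nonneg _
        have hble : b ≤ 1 := by
          have hle := aux_norm_le V (J x)
          rw [J.norm_map, hxn] at hle
          rw [hbd]; exact hle
        rw [ha] at hfh hcs
        have hnn : (0:ℝ) ≤ 1^2 * b^2 - c^2 := by nlinarith
        have hsq : 1^2 * b^2 - c^2 = ((1^2 + b^2)/2)^2 := by
          have hss := Real.sq_sqrt hnn
          rw [hfh] at hss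
          linarith
        have hb1 : b = 1 := by nlinarith [sq_nonneg c, sq_nonneg (b-1), sq_nonneg (b+1)]
        have hJxV : J x ∈ V := aux_mem V (J x) (by rw [← hbd, hb1, J.norm_map, hxn])
        have hvx : J v = ‖v‖ • J x := by
          rw [hxdef, _root_.map_smul, smul_inv_smul₀ hn0]
        rw [hvx]; exact V.smul_mem _ hJxV
    refine le_antisymm ?_ ?_
    · rintro w hw
      obtain ⟨v, hv, rfl⟩ := Submodule.mem_map.mp hw
      simpa using hsub v hv
    · intro v hv
      refine Submodule.mem_map.mpr ⟨-(J v), V.neg_mem (hsub v hv), ?_⟩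
      show J (-(J v)) = v
      rw [map_neg, hJ, neg_neg]
  · have hpt := aux_pt J V (aux_J J hJ) (aux_comm J V hJV)
    have hfg : f = g := by
      rw [hfdef, hgdef]
      funext x
      exact hpt x
    rw [hfg]

end Aux

/-- For a `2k`-dimensional real subspace `V ⊆ ℂ^{n+1}` and the
rotation-invariant measure on `S^{2n+1}`,
`∫ vol(Π_V x ∧ Π_V Jx) dx ≤ ∫ ‖Π_V x‖² dx`, with equality iff `V` is a complex
subspace (`JV = V`). Here `vol(u ∧ w) = √(‖u‖²‖w‖² - ⟨u,w⟩²)`. -/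
theorem stmt_2 (n k : ℕ)
    (J : EuclideanSpace ℝ (Fin (2 * n + 2)) ≃ₗᵢ[ℝ] EuclideanSpace ℝ (Fin (2 * n + 2)))
    (hJ : ∀ x, J (J x) = -x)
    (V : Submodule ℝ (EuclideanSpace ℝ (Fin (2 * n + 2))))
    (hV : Module.finrank ℝ V = 2 * k)
    (μ : Measure (EuclideanSpace ℝ (Fin (2 * n + 2)))) [IsFiniteMeasure μ] (hμ : μ ≠ 0)
    (hinv : ∀ g : EuclideanSpace ℝ (Fin (2 * n + 2)) ≃ₗᵢ[ℝ]
        EuclideanSpace ℝ (Fin (2 * n + 2)), μ.map g = μ)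
    (hsphere : μ (Metric.sphere (0 : EuclideanSpace ℝ (Fin (2 * n + 2))) 1)ᶜ = 0) :
    (∫ x, Real.sqrt (‖Submodule.orthogonalProjection V x‖ ^ 2 * ‖Submodule.orthogonalProjection V (J x)‖ ^ 2
          - (⟪Submodule.orthogonalProjection V x, Submodule.orthogonalProjection V (J x)⟫) ^ 2) ∂μ
        ≤ ∫ x, ‖Submodule.orthogonalProjection V x‖ ^ 2 ∂μ) ∧
    ((∫ x, Real.sqrt (‖Submodule.orthogonalProjection V x‖ ^ 2 * ‖Submodule.orthogonalProjection V (J x)‖ ^ 2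
          - (⟪Submodule.orthogonalProjection V x, Submodule.orthogonalProjection V (J x)⟫) ^ 2) ∂μ
        = ∫ x, ‖Submodule.orthogonalProjection V x‖ ^ 2 ∂μ)
      ↔ V.map (J.toLinearEquiv : EuclideanSpace ℝ (Fin (2 * n + 2)) →ₗ[ℝ]
          EuclideanSpace ℝ (Fin (2 * n + 2))) = V) := by
  exact aux_main J hJ V μ hμ hinv hsphere
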